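/- Let ρ be a rotor configuration and σ a chip configuration on a finite directed multigraph G with a nonempty sink set S, let V' = V∖S, let u₁, u₂ : V' → ℕ, and write F^{u_i}(ρ,σ) = (ρ_i,σ_i) for i = 1,2. If ρ₁ is acyclic and σ₂(v) ≤ σ₁(v) for all v ∈ V', then u₁(v) ≤ u₂(v) for all v ∈ V'. -/
import Mathlib


/-- A finite directed multigraph `G = (V, E)` (loops and multiple edges allowed),
with source and target maps `src, tgt : E → V`, a nonempty set `S` of sinks
(`V' = V \ S`), and, for each vertex, a fixed cyclic ordering of the multiset
`E_v = {e : src e = v}` of outgoing edges, recorded by the successor map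
`nxt : E → E`, `e = e_v^i ↦ e⁺ = e_v^{i+1 mod d_v}`: it preserves sources and
acts transitively (hence cyclically) on each `E_v`. -/
structure RotorSystem where
  V : Type
  E : Type
  [fintV : Fintype V]
  [decV : DecidableEq V]
  [decE : DecidableEq E]
  [fintE : Fintype E]
  src : E → V
  tgt : E → V
  nxt : E → E
  nxt_src : ∀ e, src (nxt e) = src e
  nxt_cyclic : ∀ e e', src e = src e' → ∃ k : ℕ, nxt^[k] e = e'
  S : Set V
  [decS : DecidablePred (· ∈ S)]
  S_nonempty : S.Nonempty

attribute [instance] RotorSystem.fintV RotorSystem.decV RotorSystem.decE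
  RotorSystem.fintE RotorSystem.decS

lemma sum_card_filter {β : Type} [DecidableEq β] (s : Finset ℕ) (A : Finset β) (g : ℕ → β) :
    ∑ v ∈ A, (s.filter (fun j => g j = v)).card = (s.filter (fun j => g j ∈ A)).card := by
  simp only [Finset.card_filter]
  rw [Finset.sum_comm]
  refine Finset.sum_congr rfl fun j _ => ?_
  by_cases h : g j ∈ A
  · rw [if_pos h, Finset.sum_ite_eq A (g j) (fun _ => 1), if_pos h]
  · rw [if_neg h, Finset.sum_ite_eq A (g j) (fun _ => 1), if_neg h]

namespace RotorSystem

variable (G : RotorSystem)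

/-- `ρ : V → E` is a rotor configuration if `ρ(v) ∈ E_v` for every non-sink
vertex `v ∈ V' = V \ S` (the values at sinks are irrelevant). -/
def IsRotorConfig (ρ : G.V → G.E) : Prop := ∀ v, v ∉ G.S → G.src (ρ v) = v

/-- Firing a vertex `v ∈ V'`: the rotor at `v` is advanced from `ρ(v)` to
`ρ(v)⁺`, one chip is removed at `v`, and one chip is added at the target of
`ρ(v)⁺`.  (Chip counts may go negative.) -/
def fire (v : G.V) (s : (G.V → G.E) × (G.V → ℤ)) : (G.V → G.E) × (G.V → ℤ) :=
  (Function.update s.1 v (G.nxt (s.1 v)),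
   fun w => s.2 w - (if w = v then 1 else 0)
              + (if w = G.tgt (G.nxt (s.1 v)) then 1 else 0))

/-- Firing the vertices of a list in order.  `F^u (ρ,σ)` is `fireList L (ρ,σ)`
for any list `L` in which each `v ∈ V'` occurs exactly `u(v)` times (by
commutativity of the firing operators the result does not depend on `L`). -/
def fireList (L : List G.V) (s : (G.V → G.E) × (G.V → ℤ)) :
    (G.V → G.E) × (G.V → ℤ) :=
  L.foldl (fun s v => G.fire v s) s

/-- A rotor configuration `ρ` is acyclic if the spanning subgraph
`(V, ρ(V'))` has no directed cycles: there is no `k ≥ 1` and vertices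
`f 0, f 1, …, f k` with `f k = f 0`, each `f i ∈ V'` for `i < k`, and each
`f (i+1)` the head of the rotor edge `ρ(f i)`. -/
def Acyclic (ρ : G.V → G.E) : Prop :=
  ∀ (k : ℕ) (f : ℕ → G.V), 0 < k → (∀ i < k, f i ∉ G.S) →
    (∀ i < k, f (i + 1) = G.tgt (ρ (f i))) → f k ≠ f 0

/-- number of chips sent from `w` to `v` during the first `n` firings of `w`. -/
def Nc (ρ : G.V → G.E) (w v : G.V) (n : ℕ) : ℕ :=
  ((Finset.Ioc 0 n).filter (fun j => G.tgt (G.nxt^[j] (ρ w)) = v)).card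

lemma fireList_eq (L : List G.V) (ρ : G.V → G.E) (σ : G.V → ℤ) :
    G.fireList L (ρ, σ) =
      (fun v => G.nxt^[L.count v] (ρ v),
       fun v => σ v - L.count v + ∑ w : G.V, (G.Nc ρ w v (L.count w) : ℤ)) := by
  induction L using List.reverseRecOn with
  | nil =>
      simp [fireList, Nc]
  | append_singleton L a ih =>
      have hfold : G.fireList (L ++ [a]) (ρ, σ) = G.fire a (G.fireList L (ρ, σ)) := by
        simp [fireList, List.foldl_append]
      rw [hfold, ih]
      have hcount : ∀ v, (L ++ [a]).count v = L.count v + if a = v then 1 else 0 := by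
        intro v
        simp [List.count_append, List.count_singleton']
      ext v
      · -- rotor component
        show (Function.update (fun v => G.nxt^[L.count v] (ρ v)) a
            (G.nxt ((fun v => G.nxt^[L.count v] (ρ v)) a))) v
            = G.nxt^[(L ++ [a]).count v] (ρ v)
        rw [hcount v]
        by_cases hv : v = a
        · subst hv
          simp [Function.update_self, Function.iterate_succ_apply']
        · have : a ≠ v := fun h => hv h.symm
          simp [Function.update_of_ne hv, this]
      · -- chip component
        show (fun w => (σ w - L.count w + ∑ x : G.V, (G.Nc ρ x w (L.count x) : ℤ))
              - (if w = a then 1 else 0)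
              + (if w = G.tgt (G.nxt ((fun v => G.nxt^[L.count v] (ρ v)) a)) then 1 else 0)) v
            = σ v - ((L ++ [a]).count v : ℤ) + ∑ w : G.V, (G.Nc ρ w v ((L ++ [a]).count w) : ℤ)
        simp only []
        have hNc : ∀ w, G.Nc ρ w v ((L ++ [a]).count w) =
            G.Nc ρ w v (L.count w) +
              (if w = a then (if G.tgt (G.nxt^[L.count a + 1] (ρ a)) = v then 1 else 0) else 0) := by
          intro w
          rw [hcount w]
          by_cases hw : w = a
          · subst hw
            simp only [eq_self_iff_true, if_true]
            have hins : Finset.Ioc 0 (L.count w + 1) =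
                insert (L.count w + 1) (Finset.Ioc 0 (L.count w)) := by
              ext j; simp [Finset.mem_Ioc, Nat.lt_succ_iff]; omega
            rw [Nc, Nc, hins, Finset.filter_insert]
            by_cases ht : G.tgt (G.nxt^[L.count w + 1] (ρ w)) = v
            · rw [if_pos ht, if_pos ht, Finset.card_insert_of_notMem (by simp)]
            · rw [if_neg ht, if_neg ht]; omega
          · have : ¬ (a = w) := fun h => hw h.symm
            simp [this, hw]
        have hsum : ∑ w : G.V, (G.Nc ρ w v ((L ++ [a]).count w) : ℤ)
            = ∑ w : G.V, (G.Nc ρ w v (L.count w) : ℤ)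
              + (if G.tgt (G.nxt^[L.count a + 1] (ρ a)) = v then 1 else 0) := by
          simp only [hNc]
          push_cast
          rw [Finset.sum_add_distrib]
          congr 1
          rw [Finset.sum_ite_eq' Finset.univ a
            (fun _ => (if G.tgt (G.nxt^[L.count a + 1] (ρ a)) = v then (1:ℤ) else 0))]
          simp
        rw [hsum, hcount v]
        simp only [← Function.iterate_succ_apply']
        push_cast
        have h1 : (a = v) ↔ (v = a) := eq_comm
        have h2 : (G.tgt (G.nxt^[L.count a + 1] (ρ a)) = v) ↔
            (v = G.tgt (G.nxt^[L.count a + 1] (ρ a))) := eq_comm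
        simp only [h1, h2]
        split_ifs <;> ring

lemma Nc_mono (ρ : G.V → G.E) (w v : G.V) {m n : ℕ} (h : m ≤ n) :
    G.Nc ρ w v m ≤ G.Nc ρ w v n :=
  Finset.card_le_card (Finset.filter_subset_filter _ (Finset.Ioc_subset_Ioc le_rfl h))

lemma Nc_split (ρ : G.V → G.E) (w v : G.V) {m n : ℕ} (h : m ≤ n) :
    G.Nc ρ w v n = G.Nc ρ w v m +
      ((Finset.Ioc m n).filter (fun j => G.tgt (G.nxt^[j] (ρ w)) = v)).card := by
  rw [Nc, Nc, ← Finset.Ioc_union_Ioc_eq_Ioc (Nat.zero_le m) h, Finset.filter_union,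
    Finset.card_union_of_disjoint]
  refine Finset.disjoint_left.mpr fun j hj1 hj2 => ?_
  simp only [Finset.mem_filter, Finset.mem_Ioc] at hj1 hj2
  omega

end RotorSystem

/-- **Lemma 2.3.**  Let `ρ` be a rotor configuration and `σ` a chip
configuration on `G`, let `u₁, u₂ : V' → ℕ` (encoded as functions on `V`
vanishing on `S`), and write `F^{uᵢ}(ρ,σ) = (ρᵢ,σᵢ)`, realized by firing along
any list `Lᵢ` containing each vertex `v` exactly `uᵢ(v)` times.  If `ρ₁` is
acyclic and `σ₂ ≤ σ₁` on `V'`, then `u₁ ≤ u₂` on `V'`. -/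
theorem fire_less (G : RotorSystem)
    (ρ : G.V → G.E) (hρ : G.IsRotorConfig ρ) (σ : G.V → ℤ)
    (u₁ u₂ : G.V → ℕ) (hu₁ : ∀ v ∈ G.S, u₁ v = 0) (hu₂ : ∀ v ∈ G.S, u₂ v = 0)
    (L₁ L₂ : List G.V)
    (hL₁ : ∀ v, L₁.count v = u₁ v) (hL₂ : ∀ v, L₂.count v = u₂ v)
    (ρ₁ ρ₂ : G.V → G.E) (σ₁ σ₂ : G.V → ℤ)
    (h₁ : G.fireList L₁ (ρ, σ) = (ρ₁, σ₁))
    (h₂ : G.fireList L₂ (ρ, σ) = (ρ₂, σ₂))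
    (hacyc₁ : G.Acyclic ρ₁)
    (hσ : ∀ v, v ∉ G.S → σ₂ v ≤ σ₁ v) :
    ∀ v, v ∉ G.S → u₁ v ≤ u₂ v := by
  classical
  intro v₀ hv₀
  by_contra hcon
  push_neg at hcon
  rw [G.fireList_eq] at h₁ h₂
  simp only [hL₁] at h₁
  simp only [hL₂] at h₂
  obtain ⟨hρ₁, hσ₁⟩ := Prod.mk.inj h₁
  obtain ⟨hρ₂, hσ₂⟩ := Prod.mk.inj h₂
  set A : Finset G.V := Finset.univ.filter (fun v => v ∉ G.S ∧ u₂ v < u₁ v) with hA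
  have hmemA : ∀ v, v ∈ A ↔ (v ∉ G.S ∧ u₂ v < u₁ v) := by
    intro v; simp [hA]
  have hv₀A : v₀ ∈ A := (hmemA v₀).mpr ⟨hv₀, hcon⟩
  -- step 1 : every rotor edge from A points back into A
  have key : ∀ w ∈ A, G.tgt (ρ₁ w) ∈ A := by
    intro w₀ hw₀A
    by_contra hw₀
    have hw₀lt : u₂ w₀ < u₁ w₀ := ((hmemA w₀).mp hw₀A).2
    -- chip-count identity
    have hdiff : ∀ v, σ₁ v - σ₂ v = ((u₂ v : ℤ) - u₁ v) +
        ∑ w : G.V, (((G.Nc ρ w v (u₁ w)) : ℤ) - G.Nc ρ w v (u₂ w)) := by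
      intro v
      have e1 : σ₁ v = σ v - u₁ v + ∑ w : G.V, ((G.Nc ρ w v (u₁ w)) : ℤ) := by
        rw [← hσ₁]
      have e2 : σ₂ v = σ v - u₂ v + ∑ w : G.V, ((G.Nc ρ w v (u₂ w)) : ℤ) := by
        rw [← hσ₂]
      rw [e1, e2, Finset.sum_sub_distrib]; ring
    have S0 : (0:ℤ) ≤ ∑ v ∈ A, (σ₁ v - σ₂ v) :=
      Finset.sum_nonneg fun v hv => sub_nonneg.mpr (hσ v ((hmemA v).mp hv).1)
    have step1 : ∑ v ∈ A, ((u₁ v : ℤ) - u₂ v) ≤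
        ∑ w : G.V, ∑ v ∈ A, (((G.Nc ρ w v (u₁ w)) : ℤ) - G.Nc ρ w v (u₂ w)) := by
      rw [Finset.sum_comm]
      have : ∑ v ∈ A, (σ₁ v - σ₂ v) = ∑ v ∈ A, (((u₂ v : ℤ) - u₁ v) +
          ∑ w : G.V, (((G.Nc ρ w v (u₁ w)) : ℤ) - G.Nc ρ w v (u₂ w))) :=
        Finset.sum_congr rfl fun v _ => hdiff v
      rw [this, Finset.sum_add_distrib] at S0
      have h' : ∑ v ∈ A, ((u₂ v : ℤ) - u₁ v) = - ∑ v ∈ A, ((u₁ v : ℤ) - u₂ v) := by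
        rw [← Finset.sum_neg_distrib]; exact Finset.sum_congr rfl fun v _ => by ring
      rw [h'] at S0
      linarith
    -- bound on the inner sums
    have Tle : ∀ w : G.V, ∑ v ∈ A, (((G.Nc ρ w v (u₁ w)) : ℤ) - G.Nc ρ w v (u₂ w)) ≤
        (if w ∈ A then (u₁ w : ℤ) - u₂ w else 0) := by
      intro w
      by_cases hw : w ∈ A
      · rw [if_pos hw]
        have hle : u₂ w ≤ u₁ w := le_of_lt ((hmemA w).mp hw).2
        have e : ∀ v, ((G.Nc ρ w v (u₁ w)) : ℤ) - G.Nc ρ w v (u₂ w) =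
            (((Finset.Ioc (u₂ w) (u₁ w)).filter
              (fun j => G.tgt (G.nxt^[j] (ρ w)) = v)).card : ℤ) := fun v => by
          rw [G.Nc_split ρ w v hle]; push_cast; ring
        simp only [e]
        rw [← Nat.cast_sum, sum_card_filter]
        have hc := Finset.card_filter_le (Finset.Ioc (u₂ w) (u₁ w))
          (fun j => G.tgt (G.nxt^[j] (ρ w)) ∈ A)
        rw [Nat.card_Ioc] at hc
        omega
      · rw [if_neg hw]
        refine Finset.sum_nonpos fun v _ => sub_nonpos.mpr (Nat.cast_le.mpr ?_)
        have hle : u₁ w ≤ u₂ w := by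
          by_cases hwS : w ∈ G.S
          · rw [hu₁ w hwS, hu₂ w hwS]
          · have h' := (hmemA w).not.mp hw
            push_neg at h'
            exact h' hwS
        exact G.Nc_mono ρ w v hle
    -- strict bound at w₀
    have Tw₀ : ∑ v ∈ A, (((G.Nc ρ w₀ v (u₁ w₀)) : ℤ) - G.Nc ρ w₀ v (u₂ w₀)) ≤
        ((u₁ w₀ : ℤ) - u₂ w₀) - 1 := by
      have hle : u₂ w₀ ≤ u₁ w₀ := le_of_lt hw₀lt
      have e : ∀ v, ((G.Nc ρ w₀ v (u₁ w₀)) : ℤ) - G.Nc ρ w₀ v (u₂ w₀) =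
          (((Finset.Ioc (u₂ w₀) (u₁ w₀)).filter
            (fun j => G.tgt (G.nxt^[j] (ρ w₀)) = v)).card : ℤ) := fun v => by
        rw [G.Nc_split ρ w₀ v hle]; push_cast; ring
      simp only [e]
      rw [← Nat.cast_sum, sum_card_filter]
      have htop : G.tgt (G.nxt^[u₁ w₀] (ρ w₀)) ∉ A := by
        have : ρ₁ w₀ = G.nxt^[u₁ w₀] (ρ w₀) := by rw [← hρ₁]
        rwa [this] at hw₀
      have hsub : (Finset.Ioc (u₂ w₀) (u₁ w₀)).filter
          (fun j => G.tgt (G.nxt^[j] (ρ w₀)) ∈ A) ⊆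
          (Finset.Ioc (u₂ w₀) (u₁ w₀)).erase (u₁ w₀) := by
        intro j hj
        rw [Finset.mem_filter] at hj
        rw [Finset.mem_erase]
        refine ⟨?_, hj.1⟩
        intro hje
        exact htop (hje ▸ hj.2)
      have hc := Finset.card_le_card hsub
      rw [Finset.card_erase_of_mem (Finset.mem_Ioc.mpr ⟨hw₀lt, le_rfl⟩), Nat.card_Ioc] at hc
      omega
    -- combine
    have hsplit : ∑ w : G.V, ∑ v ∈ A, (((G.Nc ρ w v (u₁ w)) : ℤ) - G.Nc ρ w v (u₂ w)) ≤
        (∑ w : G.V, if w ∈ A then (u₁ w : ℤ) - u₂ w else 0) - 1 := by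
      rw [← Finset.add_sum_erase _ _ (Finset.mem_univ w₀),
        ← Finset.add_sum_erase _ (fun w => if w ∈ A then (u₁ w : ℤ) - u₂ w else 0)
          (Finset.mem_univ w₀)]
      have h2 := Finset.sum_le_sum (fun w (_ : w ∈ Finset.univ.erase w₀) => Tle w)
      have h1 : (if w₀ ∈ A then (u₁ w₀ : ℤ) - u₂ w₀ else 0) = (u₁ w₀ : ℤ) - u₂ w₀ :=
        if_pos hw₀A
      linarith
    have hite : (∑ w : G.V, if w ∈ A then (u₁ w : ℤ) - u₂ w else 0) =
        ∑ v ∈ A, ((u₁ v : ℤ) - u₂ v) := by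
      rw [Finset.sum_ite_mem, Finset.univ_inter]
    rw [hite] at hsplit
    linarith
  -- step 2 : produce a cycle, contradicting acyclicity
  set g : G.V → G.V := fun v => G.tgt (ρ₁ v) with hg
  have hiter : ∀ n, g^[n] v₀ ∈ A := by
    intro n
    induction n with
    | zero => simpa using hv₀A
    | succ n ih => rw [Function.iterate_succ_apply']; exact key _ ih
  obtain ⟨i, _, j, _, hij, heq⟩ :=
    Finset.exists_ne_map_eq_of_card_lt_of_maps_to
      (s := Finset.range (A.card + 1)) (t := A) (by simp) (fun i _ => hiter i)
  obtain ⟨i, j, hlt, heq⟩ : ∃ i j, i < j ∧ g^[i] v₀ = g^[j] v₀ := by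
    rcases hij.lt_or_gt with h | h
    · exact ⟨i, j, h, heq⟩
    · exact ⟨j, i, h, heq.symm⟩
  refine hacyc₁ (j - i) (fun n => g^[i + n] v₀) (by omega) ?_ ?_ ?_
  · intro n _
    exact ((hmemA _).mp (hiter (i + n))).1
  · intro n _
    show g^[i + (n + 1)] v₀ = G.tgt (ρ₁ (g^[i + n] v₀))
    rw [show i + (n + 1) = (i + n) + 1 from rfl, Function.iterate_succ_apply']
  · show g^[i + (j - i)] v₀ = g^[i + 0] v₀
    rw [show i + (j - i) = j from by omega, show i + 0 = i from rfl]
    exact heq.symm
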